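/- Let (T(t))_{t≥0} be a C₀-semigroup on a complex Banach space X with infinitesimal generator A such that ‖T(t)v‖/t → 0 as t → ∞ for every v ∈ X. Suppose A has the SVEP, x ∈ D(A), and 0 ∉ σ_A(Ax). Then T(t) is local mean ergodic at x. -/

import Mathlib

open Filter Topology Metric

/-- A strongly continuous one-parameter semigroup of bounded linear operators:
`T 0 = I`, `T (s+t) = T s ∘ T t` for `s,t ≥ 0`, and `t ↦ T t x` is continuous
on `[0,∞)` for every `x`. -/
structure IsC0Semigroup {X : Type*} [NormedAddCommGroup X] [NormedSpace ℂ X]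
    (T : ℝ → X →L[ℂ] X) : Prop where
  map_zero : T 0 = 1
  map_add : ∀ s t : ℝ, 0 ≤ s → 0 ≤ t → T (s + t) = T s ∘L T t
  strong_continuity : ∀ x : X, ContinuousOn (fun t : ℝ => T t x) (Set.Ici 0)

/-- `A`, with domain `D`, is the infinitesimal generator of the semigroup `T`:
`D = {x : lim_{t→0⁺} (T t x - x)/t exists}` and `A x` is that limit on `D`. -/
structure IsGenerator {X : Type*} [NormedAddCommGroup X] [NormedSpace ℂ X]
    (T : ℝ → X →L[ℂ] X) (D : Set X) (A : X → X) : Prop where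
  mem_domain_iff : ∀ x : X,
    x ∈ D ↔ ∃ y : X, Tendsto (fun t : ℝ => t⁻¹ • (T t x - x)) (𝓝[>] 0) (𝓝 y)
  tendsto_of_mem : ∀ x ∈ D,
    Tendsto (fun t : ℝ => t⁻¹ • (T t x - x)) (𝓝[>] 0) (𝓝 (A x))

/-- The Cesàro average `C(t)x = t⁻¹ ∫₀ᵗ T(s)x ds`. -/
noncomputable def cesaro {X : Type*} [NormedAddCommGroup X] [NormedSpace ℂ X]
    (T : ℝ → X →L[ℂ] X) (t : ℝ) (x : X) : X :=
  t⁻¹ • ∫ s in (0:ℝ)..t, T s x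

/-- The local resolvent set of the (possibly unbounded) operator `A` with domain `D`
at `x`: the union of all open `U ⊆ ℂ` admitting an analytic `f : U → D` with
`(A - μ)f(μ) = x` on `U`. -/
def localResolventSet {X : Type*} [NormedAddCommGroup X] [NormedSpace ℂ X]
    (D : Set X) (A : X → X) (x : X) : Set ℂ :=
  {μ | ∃ U : Set ℂ, IsOpen U ∧ μ ∈ U ∧ ∃ f : ℂ → X, AnalyticOnNhd ℂ f U ∧
      ∀ z ∈ U, f z ∈ D ∧ A (f z) - z • f z = x}

/-- The local spectrum `σ_A(x) = ℂ \ ρ_A(x)`. -/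
def localSpectrum {X : Type*} [NormedAddCommGroup X] [NormedSpace ℂ X]
    (D : Set X) (A : X → X) (x : X) : Set ℂ :=
  (localResolventSet D A x)ᶜ

/-- `A` (with domain `D`) has the single valued extension property at `μ₀`:
on every open disk centred at `μ₀`, the only analytic `f` with values in `D`
satisfying `(z - A) f z = 0` is `f ≡ 0`. -/
def HasSVEPAt {X : Type*} [NormedAddCommGroup X] [NormedSpace ℂ X]
    (D : Set X) (A : X → X) (μ₀ : ℂ) : Prop :=
  ∀ r : ℝ, 0 < r → ∀ f : ℂ → X, AnalyticOnNhd ℂ f (ball μ₀ r) →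
    (∀ z ∈ ball μ₀ r, f z ∈ D ∧ z • f z - A (f z) = 0) →
    ∀ z ∈ ball μ₀ r, f z = 0


section LocalErgodicAux

open Set MeasureTheory intervalIntegral

variable {X : Type*} [NormedAddCommGroup X] [NormedSpace ℂ X]
variable {T : ℝ → X →L[ℂ] X} {D : Set X} {A : X → X}

private lemma gen_unique (hA : IsGenerator T D A) {v y : X} (hv : v ∈ D)
    (h : Tendsto (fun t : ℝ => t⁻¹ • (T t v - v)) (𝓝[>] 0) (𝓝 y)) : A v = y :=
  tendsto_nhds_unique (hA.tendsto_of_mem v hv) h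

private lemma gen_sub (hA : IsGenerator T D A) {a b : X} (ha : a ∈ D) (hb : b ∈ D) :
    a - b ∈ D ∧ A (a - b) = A a - A b := by
  have h : Tendsto (fun t : ℝ => t⁻¹ • (T t (a - b) - (a - b))) (𝓝[>] 0) (𝓝 (A a - A b)) := by
    refine ((hA.tendsto_of_mem a ha).sub (hA.tendsto_of_mem b hb)).congr fun t => ?_
    simp only [map_sub, smul_sub]; abel
  have hmem : a - b ∈ D := (hA.mem_domain_iff _).2 ⟨_, h⟩
  exact ⟨hmem, gen_unique hA hmem h⟩

private lemma gen_smul (hA : IsGenerator T D A) {v : X} (hv : v ∈ D) (c : ℂ) :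
    c • v ∈ D ∧ A (c • v) = c • A v := by
  have h : Tendsto (fun t : ℝ => t⁻¹ • (T t (c • v) - c • v)) (𝓝[>] 0) (𝓝 (c • A v)) := by
    refine ((hA.tendsto_of_mem v hv).const_smul c).congr fun t => ?_
    rw [_root_.map_smul, ← smul_sub, smul_comm]
  have hmem : c • v ∈ D := (hA.mem_domain_iff _).2 ⟨_, h⟩
  exact ⟨hmem, gen_unique hA hmem h⟩

private lemma Tintegrable (hT : IsC0Semigroup T) (v : X) {t : ℝ} (ht : 0 ≤ t) :
    IntervalIntegrable (fun s => T s v) volume 0 t :=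
  ((hT.strong_continuity v).mono
    (by rw [Set.uIcc_of_le ht]; exact Set.Icc_subset_Ici_self)).intervalIntegrable

private lemma hasDerivRight (hT : IsC0Semigroup T) (hA : IsGenerator T D A) {v : X} (hv : v ∈ D)
    {y : ℝ} (hy : 0 ≤ y) :
    HasDerivWithinAt (fun s => T s v) (T y (A v)) (Set.Ici y) y := by
  rw [hasDerivWithinAt_iff_tendsto_slope, Set.Ici_sdiff_left]
  have h1 : Tendsto (fun z : ℝ => z - y) (𝓝[>] y) (𝓝[>] (0:ℝ)) := by
    apply tendsto_nhdsWithin_of_tendsto_nhds_of_eventually_within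
    · exact ((continuous_sub_right y).tendsto' y 0 (sub_self y)).mono_left nhdsWithin_le_nhds
    · filter_upwards [self_mem_nhdsWithin] with z hz
      exact sub_pos.2 (Set.mem_Ioi.1 hz)
  have h2 : Tendsto (fun h : ℝ => T y (h⁻¹ • (T h v - v))) (𝓝[>] (0:ℝ)) (𝓝 (T y (A v))) :=
    ((T y).continuous.tendsto _).comp (hA.tendsto_of_mem v hv)
  refine (h2.comp h1).congr' ?_
  filter_upwards [self_mem_nhdsWithin] with z hz
  have hzy : (0:ℝ) < z - y := sub_pos.2 hz
  have hsplit : T z v = T y (T (z - y) v) := by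
    have := hT.map_add y (z - y) hy hzy.le
    rw [add_sub_cancel] at this
    rw [this]; rfl
  show T y ((z - y)⁻¹ • (T (z - y) v - v)) = slope (fun s => T s v) y z
  rw [slope_def_module]
  rw [(T y).map_smul_of_tower, map_sub, hsplit]

variable [CompleteSpace X]

private lemma fund (hT : IsC0Semigroup T) (hA : IsGenerator T D A) {v : X} (hv : v ∈ D)
    {t : ℝ} (ht : 0 ≤ t) :
    T t v - v = ∫ s in (0:ℝ)..t, T s (A v) := by
  have key : ∀ y ∈ Set.Icc 0 t, T y v = v + ∫ s in (0:ℝ)..y, T s (A v) := by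
    apply eq_of_has_deriv_right_eq (f' := fun s => T s (A v))
    · intro y hy
      exact hasDerivRight hT hA hv hy.1
    · intro y hy
      have hmeas : StronglyMeasurableAtFilter (fun s => T s (A v)) (𝓝[>] y) volume := by
        refine ⟨Set.Ici 0, ?_,
          (hT.strong_continuity (A v)).aestronglyMeasurable measurableSet_Ici⟩
        exact mem_of_superset self_mem_nhdsWithin (fun z hz => le_of_lt (lt_of_le_of_lt hy.1 hz))
      have hcont : ContinuousWithinAt (fun s => T s (A v)) (Set.Ioi y) y := by
        refine ((hT.strong_continuity (A v)) y hy.1).mono ?_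
        exact fun z hz => le_of_lt (lt_of_le_of_lt hy.1 hz)
      have hI : IntervalIntegrable (fun s => T s (A v)) volume 0 y := Tintegrable hT _ hy.1
      exact (intervalIntegral.integral_hasDerivWithinAt_right hI hmeas hcont).const_add v
    · exact (hT.strong_continuity v).mono Set.Icc_subset_Ici_self
    · apply ContinuousOn.add continuousOn_const
      have := intervalIntegral.continuousOn_primitive_interval' (Tintegrable hT (A v) ht)
        (Set.left_mem_uIcc)
      rwa [Set.uIcc_of_le ht] at this
    · simp [hT.map_zero, ContinuousLinearMap.one_apply]
  have := key t ⟨ht, le_refl t⟩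
  rw [this]; abel

private lemma gen_closed (hT : IsC0Semigroup T) (hA : IsGenerator T D A) {w : ℕ → X} {v g : X}
    (hwD : ∀ n, w n ∈ D) (hv : Tendsto w atTop (𝓝 v))
    (hg : Tendsto (fun n => A (w n)) atTop (𝓝 g)) : v ∈ D ∧ A v = g := by
  have key : ∀ t : ℝ, 0 ≤ t → T t v - v = ∫ s in (0:ℝ)..t, T s g := by
    intro t ht
    obtain ⟨C, hC⟩ : ∃ C, ∀ i : Set.Icc (0:ℝ) t, ‖T i‖ ≤ C := by
      apply banach_steinhaus
      intro x
      obtain ⟨C, hC⟩ := (isCompact_Icc (a := (0:ℝ)) (b := t)).exists_bound_of_continuousOn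
        ((hT.strong_continuity x).mono Set.Icc_subset_Ici_self)
      exact ⟨C, fun i => hC i i.2⟩
    have h1 : Tendsto (fun n => T t (w n) - w n) atTop (𝓝 (T t v - v)) :=
      (((T t).continuous.tendsto v).comp hv).sub hv
    have h2 : Tendsto (fun n => T t (w n) - w n) atTop (𝓝 (∫ s in (0:ℝ)..t, T s g)) := by
      have heq : (fun n => T t (w n) - w n)
          = fun n => ∫ s in (0:ℝ)..t, T s (A (w n)) := funext fun n => fund hT hA (hwD n) ht
      rw [heq, tendsto_iff_norm_sub_tendsto_zero]
      have hgn : Tendsto (fun n => C * ‖A (w n) - g‖ * |t - 0|) atTop (𝓝 (C * 0 * |t - 0|)) := by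
        apply Tendsto.mul_const
        exact (tendsto_iff_norm_sub_tendsto_zero.1 hg).const_mul C
      rw [mul_zero, zero_mul] at hgn
      apply squeeze_zero (fun n => norm_nonneg _) ?_ hgn
      intro n
      rw [← intervalIntegral.integral_sub (Tintegrable hT _ ht) (Tintegrable hT _ ht)]
      apply intervalIntegral.norm_integral_le_of_norm_le_const
      intro s hs
      rw [Set.uIoc_of_le ht] at hs
      have hsI : s ∈ Set.Icc (0:ℝ) t := ⟨hs.1.le, hs.2⟩
      calc ‖T s (A (w n)) - T s g‖ = ‖T s (A (w n) - g)‖ := by rw [map_sub]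
        _ ≤ ‖T s‖ * ‖A (w n) - g‖ := (T s).le_opNorm _
        _ ≤ C * ‖A (w n) - g‖ := by gcongr; exact hC ⟨s, hsI⟩
    exact tendsto_nhds_unique h1 h2
  have hmem : Tendsto (fun t : ℝ => t⁻¹ • (T t v - v)) (𝓝[>] 0) (𝓝 g) := by
    rw [Metric.tendsto_nhdsWithin_nhds]
    intro ε hε
    have hc := (hT.strong_continuity g) 0 Set.self_mem_Ici
    rw [Metric.continuousWithinAt_iff] at hc
    obtain ⟨δ, hδ, hδ'⟩ := hc (ε/2) (by positivity)
    refine ⟨δ, hδ, fun {t} htpos htδ => ?_⟩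
    have ht0 : (0 : ℝ) < t := htpos
    rw [dist_eq_norm] at htδ ⊢
    rw [sub_zero, Real.norm_eq_abs, abs_of_pos ht0] at htδ
    have h4 : ∫ s in (0:ℝ)..t, (T s g - g) = (T t v - v) - t • g := by
      rw [intervalIntegral.integral_sub (Tintegrable hT g ht0.le) intervalIntegrable_const,
        intervalIntegral.integral_const, ← key t ht0.le, sub_zero]
    have heq2 : t⁻¹ • (∫ s in (0:ℝ)..t, (T s g - g)) = t⁻¹ • (T t v - v) - g := by
      rw [h4, smul_sub, smul_smul, inv_mul_cancel₀ ht0.ne', one_smul]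
    rw [← heq2]
    have hb : ‖∫ s in (0:ℝ)..t, (T s g - g)‖ ≤ (ε/2) * |t - 0| := by
      apply intervalIntegral.norm_integral_le_of_norm_le_const
      intro s hs
      rw [Set.uIoc_of_le ht0.le] at hs
      have hd : dist s 0 < δ := by
        rw [dist_eq_norm, sub_zero, Real.norm_eq_abs, abs_of_pos hs.1]
        exact lt_of_le_of_lt hs.2 htδ
      have h3 := hδ' hs.1.le hd
      rw [hT.map_zero, ContinuousLinearMap.one_apply, dist_eq_norm] at h3
      exact h3.le
    rw [norm_smul, Real.norm_eq_abs, abs_inv, abs_of_pos ht0]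
    calc t⁻¹ * ‖∫ s in (0:ℝ)..t, (T s g - g)‖ ≤ t⁻¹ * ((ε/2) * |t - 0|) := by gcongr
      _ = ε/2 := by rw [sub_zero, abs_of_pos ht0]; field_simp
      _ < ε := by linarith
  exact ⟨(hA.mem_domain_iff v).2 ⟨g, hmem⟩,
    gen_unique hA ((hA.mem_domain_iff v).2 ⟨g, hmem⟩) hmem⟩

private lemma growth_smul
    (hgrowth : ∀ v : X, Tendsto (fun t : ℝ => ‖T t v‖ / t) atTop (𝓝 0)) (w : X) :
    Tendsto (fun t : ℝ => t⁻¹ • (T t w - w)) atTop (𝓝 0) := by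
  rw [tendsto_zero_iff_norm_tendsto_zero]
  have hlim : Tendsto (fun t : ℝ => ‖T t w‖ / t + ‖w‖ / t) atTop (𝓝 (0 + 0)) :=
    (hgrowth w).add (tendsto_const_nhds.div_atTop tendsto_id)
  rw [add_zero] at hlim
  apply squeeze_zero' (Eventually.of_forall fun t => norm_nonneg _) ?_ hlim
  filter_upwards [eventually_gt_atTop (0:ℝ)] with t ht
  rw [norm_smul, Real.norm_eq_abs, abs_inv, abs_of_pos ht]
  calc t⁻¹ * ‖T t w - w‖ ≤ t⁻¹ * (‖T t w‖ + ‖w‖) := by gcongr; exact norm_sub_le _ _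
    _ = ‖T t w‖ / t + ‖w‖ / t := by ring

end LocalErgodicAux

/-- If `‖T(t)v‖/t → 0` for every `v`, `A` has the SVEP, `x ∈ D(A)` and `0 ∉ σ_A(Ax)`,
then `T(t)` is local mean ergodic at `x`. -/
theorem localMeanErgodic_of_zero_not_mem_localSpectrum
    {X : Type*} [NormedAddCommGroup X] [NormedSpace ℂ X] [CompleteSpace X]
    (T : ℝ → X →L[ℂ] X) (D : Set X) (A : X → X)
    (hT : IsC0Semigroup T) (hA : IsGenerator T D A)
    (hgrowth : ∀ v : X, Tendsto (fun t : ℝ => ‖T t v‖ / t) atTop (𝓝 0))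
    (hSVEP : ∀ μ : ℂ, HasSVEPAt D A μ) (x : X) (hxD : x ∈ D)
    (h0 : (0 : ℂ) ∉ localSpectrum D A (A x)) :
    ∃ y : X, Tendsto (fun t : ℝ => cesaro T t x) atTop (𝓝 y) := by
  have h0' : (0 : ℂ) ∈ localResolventSet D A (A x) := by
    simpa [localSpectrum] using h0
  obtain ⟨U, hU, h0U, f, hf, hfD⟩ := h0'
  have hf0D : f 0 ∈ D := (hfD 0 h0U).1
  have hf0 : A (f 0) = A x := by
    have := (hfD 0 h0U).2
    rwa [zero_smul, sub_zero] at this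
  obtain ⟨huD, hAu⟩ := gen_sub hA hxD hf0D
  set u : X := x - f 0 with hu
  have hAu0 : A u = 0 := by rw [hAu, hf0, sub_self]
  obtain ⟨ε, hε, hball⟩ := Metric.isOpen_iff.mp hU 0 h0U
  set z : ℕ → ℂ := fun n => (((ε/2) / (n+1) : ℝ) : ℂ) with hz
  have hzpos : ∀ n : ℕ, (0:ℝ) < (ε/2) / (n+1) := by
    intro n; positivity
  have hzne : ∀ n, z n ≠ 0 := by
    intro n
    simp only [hz, ne_eq, Complex.ofReal_eq_zero]
    exact (hzpos n).ne'
  have hzU : ∀ n, z n ∈ U := by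
    intro n
    apply hball
    rw [mem_ball, dist_zero_right, hz, Complex.norm_real, Real.norm_eq_abs,
      abs_of_pos (hzpos n)]
    calc (ε/2) / (n+1) ≤ ε/2 := by
          apply div_le_self (le_of_lt (by positivity))
          simp [le_add_iff_nonneg_left]
      _ < ε := by linarith
  have hz0 : Tendsto z atTop (𝓝[≠] (0:ℂ)) := by
    apply tendsto_nhdsWithin_of_tendsto_nhds_of_eventually_within
    · have h1 : Tendsto (fun n : ℕ => (ε/2) / (n+1)) atTop (𝓝 0) := by
        apply Tendsto.div_atTop tendsto_const_nhds
        exact tendsto_natCast_atTop_atTop.atTop_add tendsto_const_nhds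
      have := (Complex.continuous_ofReal.tendsto 0).comp h1
      exact this
    · exact Eventually.of_forall fun n => hzne n
  set gseq : ℕ → X := fun n => (z n)⁻¹ • (f (z n) - f 0) with hgseq
  have hgprops : ∀ n, gseq n ∈ D ∧ A (gseq n) = f (z n) := by
    intro n
    obtain ⟨hsubD, hsubA⟩ := gen_sub hA (hfD (z n) (hzU n)).1 hf0D
    obtain ⟨hsD, hsA⟩ := gen_smul hA hsubD ((z n)⁻¹)
    refine ⟨hsD, ?_⟩
    rw [hsA, hsubA, hf0]
    have hfz : A (f (z n)) = A x + z n • f (z n) := by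
      have := (hfD (z n) (hzU n)).2
      rw [sub_eq_iff_eq_add] at this
      exact this
    rw [hfz]
    rw [add_sub_cancel_left, smul_smul, inv_mul_cancel₀ (hzne n), one_smul]
  have hderiv : Tendsto gseq atTop (𝓝 (deriv f 0)) := by
    have hd : HasDerivAt f (deriv f 0) 0 := ((hf 0 h0U).differentiableAt).hasDerivAt
    have hslope := hasDerivAt_iff_tendsto_slope.1 hd
    have := hslope.comp hz0
    refine this.congr fun n => ?_
    simp only [Function.comp_apply, slope_def_module, sub_zero]; rfl
  have hAg : Tendsto (fun n => A (gseq n)) atTop (𝓝 (f 0)) := by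
    have hcont : ContinuousAt f 0 := (hf 0 h0U).continuousAt
    have := hcont.tendsto.comp (hz0.mono_right nhdsWithin_le_nhds)
    refine this.congr fun n => ?_
    simp only [Function.comp_apply, (hgprops n).2]
  obtain ⟨hwD, hAw⟩ := gen_closed hT hA (fun n => (hgprops n).1) hderiv hAg
  set w : X := deriv f 0
  have hTu : ∀ s : ℝ, 0 ≤ s → T s u = u := by
    intro s hs
    have := fund hT hA huD hs
    rw [hAu0] at this
    simp only [map_zero, intervalIntegral.integral_zero] at this
    exact sub_eq_zero.mp this
  refine ⟨u, ?_⟩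
  have hxuw : x = u + A w := by rw [hAw, hu]; abel
  have heq : ∀ᶠ t in atTop, cesaro T t x = u + t⁻¹ • (T t w - w) := by
    filter_upwards [eventually_gt_atTop (0:ℝ)] with t ht
    have hsplit : Set.EqOn (fun s => T s x) (fun s => u + T s (A w)) (Set.uIcc (0:ℝ) t) := by
      intro s hs
      rw [Set.uIcc_of_le ht.le] at hs
      simp only
      rw [hxuw, map_add, hTu s hs.1]
    rw [cesaro, intervalIntegral.integral_congr hsplit,
      intervalIntegral.integral_add intervalIntegrable_const (Tintegrable hT _ ht.le),
      intervalIntegral.integral_const, ← fund hT hA hwD ht.le, sub_zero, smul_add,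
      smul_smul, inv_mul_cancel₀ ht.ne', one_smul]
  have hlim : Tendsto (fun t : ℝ => u + t⁻¹ • (T t w - w)) atTop (𝓝 (u + 0)) :=
    tendsto_const_nhds.add (growth_smul hgrowth w)
  rw [add_zero] at hlim
  exact Filter.Tendsto.congr' (Filter.EventuallyEq.symm heq) hlim
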